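/- Let A = (a_ij) be an N×N real matrix with nonnegative entries and zero diagonal such that the directed graph G[A] is strongly connected, and let α_1,…,α_N ≥ 0 satisfy d_i^+[A] · α_i < 1/2 for every i, where d_i^+[A] = Σ_j a_ij. Let y_1,…,y_N : [0,∞) → ℝ^m be continuous functions, define u_i(t) = Σ_{j=1}^N a_ij (y_j(t) − y_i(t)), and suppose there exist constants 𝒱_i ≥ 0 such that ∫_0^T (⟨y_i(t), u_i(t)⟩ + α_i |u_i(t)|²) dt ≥ −𝒱_i for all T ≥ 0 and all i. Then ∫_0^∞ |y_j(t) − y_i(t)|² dt < ∞ for all i, j. -/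

import Mathlib

open RealInnerProductSpace MeasureTheory

/-- For a strongly connected weighted digraph there is a positive left
null vector of the Laplacian. -/
lemma exists_perron_vector (N : ℕ) [Nonempty (Fin N)] (A : Fin N → Fin N → ℝ)
    (hA_nonneg : ∀ i j, 0 ≤ A i j) (hA_diag : ∀ i, A i i = 0)
    (hconn : ∀ i j : Fin N, i ≠ j → Relation.TransGen (fun a b => 0 < A a b) i j) :
    ∃ ξ : Fin N → ℝ, (∀ i, 0 < ξ i) ∧ ∀ j, ∑ i, ξ i * A i j = ξ j * ∑ k, A j k := by
  classical
  set d : Fin N → ℝ := fun i => ∑ k, A i k with hd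
  have hd_nonneg : ∀ i, 0 ≤ d i := fun i => Finset.sum_nonneg fun k _ => hA_nonneg i k
  set t : ℝ := 1 + ∑ i, d i with ht
  have ht_pos : 0 < t := by
    have : 0 ≤ ∑ i, d i := Finset.sum_nonneg fun i _ => hd_nonneg i
    linarith
  have hdt : ∀ i, d i < t := by
    intro i
    have h1 : d i ≤ ∑ k, d k :=
      Finset.single_le_sum (fun k _ => hd_nonneg k) (Finset.mem_univ i)
    linarith
  set P : Matrix (Fin N) (Fin N) ℝ :=
    Matrix.of (fun i j => (A i j + if i = j then t - d i else 0) / t) with hP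
  have hP_apply : ∀ i j, P i j = (A i j + if i = j then t - d i else 0) / t := fun i j => rfl
  have hP_nonneg : ∀ i j, 0 ≤ P i j := by
    intro i j
    apply div_nonneg _ ht_pos.le
    have h0 : (0:ℝ) ≤ if i = j then t - d i else 0 := by
      split
      · linarith [hdt i]
      · exact le_rfl
    linarith [hA_nonneg i j]
  have hP_diag : ∀ i, 0 < P i i := by
    intro i
    rw [hP_apply]
    apply div_pos _ ht_pos
    simp [hA_diag i]
    linarith [hdt i]
  have hP_edge : ∀ i j, 0 < A i j → 0 < P i j := by
    intro i j hij
    rw [hP_apply]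
    apply div_pos _ ht_pos
    have h0 : (0:ℝ) ≤ if i = j then t - d i else 0 := by
      split
      · linarith [hdt i]
      · exact le_rfl
    linarith
  have hP_row : ∀ i, ∑ j, P i j = 1 := by
    intro i
    have h1 : ∑ j, P i j = (∑ j, A i j + ∑ j, (if i = j then t - d i else 0)) / t := by
      simp [hP_apply, Finset.sum_add_distrib, ← Finset.sum_div]
    rw [h1, Finset.sum_ite_eq Finset.univ i fun _ => t - d i]
    simp only [Finset.mem_univ, if_true, ← hd]
    field_simp
    simp only [hd]; ring
  -- existence of a nonzero left fixed vector of P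
  set L : Matrix (Fin N) (Fin N) ℝ :=
    Matrix.of (fun i j => (if i = j then d i else 0) - A i j) with hL
  have hLdet : L.det = 0 := by
    rw [← Matrix.exists_mulVec_eq_zero_iff]
    refine ⟨fun _ => 1, ?_, ?_⟩
    · intro h
      have := congrFun h (Classical.arbitrary (Fin N))
      simp at this
    · funext i
      simp only [Matrix.mulVec, dotProduct, hL, Matrix.of_apply, mul_one]
      rw [Finset.sum_sub_distrib]
      simp [← hd]
      simp only [hd]; ring
  have hLTdet : L.transpose.det = 0 := by rw [Matrix.det_transpose]; exact hLdet
  obtain ⟨ξ0, hξ0_ne, hξ0⟩ := (Matrix.exists_mulVec_eq_zero_iff).2 hLTdet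
  have hξ0' : ∀ j, ∑ i, ξ0 i * A i j = ξ0 j * d j := by
    intro j
    have h1 : ∑ i, ((if i = j then d i else 0) - A i j) * ξ0 i = 0 := by
      have := congrFun hξ0 j
      simpa [Matrix.mulVec, dotProduct, hL] using this
    have h2 : ∑ i, (if i = j then d i else 0) * ξ0 i - ∑ i, A i j * ξ0 i = 0 := by
      calc ∑ i, (if i = j then d i else 0) * ξ0 i - ∑ i, A i j * ξ0 i
          = ∑ i, ((if i = j then d i else 0) - A i j) * ξ0 i := by
            rw [← Finset.sum_sub_distrib]
            exact Finset.sum_congr rfl fun i _ => by ring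
        _ = 0 := h1
    have h3 : ∑ i, (if i = j then d i else 0) * ξ0 i = d j * ξ0 j := by
      rw [Finset.sum_eq_single j]
      · simp
      · intro b _ hbj; simp [hbj]
      · simp
    have h4 : ∑ i, ξ0 i * A i j = ∑ i, A i j * ξ0 i :=
      Finset.sum_congr rfl fun i _ => by ring
    rw [h4]; rw [h3] at h2; linarith
  -- generic formula for left multiplication by P
  have hPsum : ∀ (w : Fin N → ℝ) (j : Fin N),
      ∑ i, w i * P i j = (∑ i, w i * A i j + w j * (t - d j)) / t := by
    intro w j
    have e1 : ∀ i, w i * P i j = (w i * A i j + w i * (if i = j then t - d i else 0)) / t := by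
      intro i; rw [hP_apply]; ring
    rw [Finset.sum_congr rfl fun i _ => e1 i, ← Finset.sum_div, Finset.sum_add_distrib]
    have e2 : ∑ i, w i * (if i = j then t - d i else 0) = w j * (t - d j) := by
      rw [Finset.sum_eq_single j]
      · simp
      · intro b _ hbj; simp [hbj]
      · simp
    rw [e2]
  have hξP : ∀ j, ∑ i, ξ0 i * P i j = ξ0 j := by
    intro j
    rw [hPsum, hξ0' j]
    field_simp
    ring
  set v : Fin N → ℝ := fun i => |ξ0 i| with hv
  have hv_nonneg : ∀ i, 0 ≤ v i := fun i => abs_nonneg _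
  have hvP_le : ∀ j, v j ≤ ∑ i, v i * P i j := by
    intro j
    calc v j = |∑ i, ξ0 i * P i j| := by rw [hξP j]
      _ ≤ ∑ i, |ξ0 i * P i j| := Finset.abs_sum_le_sum_abs _ _
      _ = ∑ i, v i * P i j := Finset.sum_congr rfl fun i _ => by
          rw [abs_mul, abs_of_nonneg (hP_nonneg i j)]
  have hsums : ∑ j, (∑ i, v i * P i j) = ∑ j, v j := by
    rw [Finset.sum_comm]
    refine Finset.sum_congr rfl fun i _ => ?_
    rw [← Finset.mul_sum, hP_row i, mul_one]
  have hvP : ∀ j, ∑ i, v i * P i j = v j := by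
    have h0 : ∑ j, ((∑ i, v i * P i j) - v j) = 0 := by
      rw [Finset.sum_sub_distrib, hsums, sub_self]
    have hterm := (Finset.sum_eq_zero_iff_of_nonneg
      (fun j _ => sub_nonneg.2 (hvP_le j))).1 h0
    intro j
    have := hterm j (Finset.mem_univ j)
    linarith
  have hPk_nonneg : ∀ k, ∀ i j : Fin N, 0 ≤ (P ^ k) i j := by
    intro k
    induction k with
    | zero =>
        intro i j
        rw [pow_zero, Matrix.one_apply]
        split <;> norm_num
    | succ k ih =>
        intro i j
        rw [pow_succ, Matrix.mul_apply]
        exact Finset.sum_nonneg fun l _ => mul_nonneg (ih i l) (hP_nonneg l j)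
  have hvPk : ∀ k (j : Fin N), ∑ i, v i * (P ^ k) i j = v j := by
    intro k
    induction k with
    | zero =>
        intro j
        rw [Finset.sum_eq_single j]
        · simp [Matrix.one_apply]
        · intro b _ hbj; simp [Matrix.one_apply, hbj]
        · simp
    | succ k ih =>
        intro j
        simp only [pow_succ, Matrix.mul_apply, Finset.mul_sum]
        rw [Finset.sum_comm]
        calc ∑ l, ∑ i, v i * ((P ^ k) i l * P l j)
            = ∑ l, (∑ i, v i * (P ^ k) i l) * P l j := by
              refine Finset.sum_congr rfl fun l _ => ?_
              rw [Finset.sum_mul]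
              exact Finset.sum_congr rfl fun i _ => by ring
          _ = ∑ l, v l * P l j := Finset.sum_congr rfl fun l _ => by rw [ih l]
          _ = v j := hvP j
  have hstep : ∀ k (i j : Fin N), 0 < (P ^ k) i j → 0 < (P ^ (k + 1)) i j := by
    intro k i j h
    rw [pow_succ, Matrix.mul_apply]
    have hle : (P ^ k) i j * P j j ≤ ∑ l, (P ^ k) i l * P l j :=
      Finset.single_le_sum
        (fun l _ => mul_nonneg (hPk_nonneg k i l) (hP_nonneg l j)) (Finset.mem_univ j)
    have := mul_pos h (hP_diag j)
    linarith
  have hmono : ∀ (i j : Fin N) (k k' : ℕ), k ≤ k' → 0 < (P ^ k) i j → 0 < (P ^ k') i j := by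
    intro i j k k' hkk' h
    induction k', hkk' using Nat.le_induction with
    | base => exact h
    | succ n hn ih => exact hstep n i j ih
  have hreach : ∀ i j : Fin N, ∃ k, 0 < (P ^ (k + 1)) i j := by
    intro i j
    by_cases hij : i = j
    · subst hij; exact ⟨0, by simpa [pow_one] using hP_diag i⟩
    · have h := hconn i j hij
      clear hij
      induction h with
      | single hab => exact ⟨0, by simpa [pow_one] using hP_edge _ _ hab⟩
      | @tail b c hab hbc ih =>
          obtain ⟨k, hk⟩ := ih
          refine ⟨k + 1, ?_⟩
          rw [pow_succ, Matrix.mul_apply]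
          have hle : (P ^ (k + 1)) i b * P b c ≤ ∑ l, (P ^ (k + 1)) i l * P l c :=
            Finset.single_le_sum
              (fun l _ => mul_nonneg (hPk_nonneg (k + 1) i l) (hP_nonneg l c))
              (Finset.mem_univ b)
          have hpos := mul_pos hk (hP_edge _ _ hbc)
          linarith
  have hreach' : ∀ p : Fin N × Fin N, ∃ k, 0 < (P ^ (k + 1)) p.1 p.2 :=
    fun p => hreach p.1 p.2
  set n : ℕ :=
    (Finset.univ.sup fun p : Fin N × Fin N => Classical.choose (hreach' p)) + 1 with hn
  have hPn_pos : ∀ i j : Fin N, 0 < (P ^ n) i j := by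
    intro i j
    have hk := Classical.choose_spec (hreach' (i, j))
    refine hmono i j _ n ?_ hk
    have h5 : Classical.choose (hreach' (i, j)) ≤
        Finset.univ.sup (fun p : Fin N × Fin N => Classical.choose (hreach' p)) :=
      Finset.le_sup (f := fun p : Fin N × Fin N => Classical.choose (hreach' p))
        (Finset.mem_univ (i, j))
    omega
  obtain ⟨i0, hi0⟩ : ∃ i0, v i0 ≠ 0 := by
    by_contra hc
    push_neg at hc
    apply hξ0_ne
    funext i
    have := hc i
    simpa [hv, abs_eq_zero] using this
  have hi0pos : 0 < v i0 := lt_of_le_of_ne (hv_nonneg i0) (Ne.symm hi0)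
  have hv_pos : ∀ j, 0 < v j := by
    intro j
    have h1 : v i0 * (P ^ n) i0 j ≤ ∑ i, v i * (P ^ n) i j :=
      Finset.single_le_sum
        (fun l _ => mul_nonneg (hv_nonneg l) (hPk_nonneg n l j)) (Finset.mem_univ i0)
    have h2 := mul_pos hi0pos (hPn_pos i0 j)
    rw [hvPk n j] at h1
    linarith
  refine ⟨v, hv_pos, fun j => ?_⟩
  have h1 := hvP j
  rw [hPsum] at h1
  have ht_ne : t ≠ 0 := ne_of_gt ht_pos
  field_simp at h1
  show ∑ i, v i * A i j = v j * d j
  linarith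

/-- Theorem 1, variant with the relaxed integrated feedback-passivity condition:
for agents diffusively coupled over a strongly connected graph with
`d_i⁺[A]·α_i < 1/2`, if `∫_0^T (⟪y_i,u_i⟫ + α_i‖u_i‖²) ≥ -𝒱_i` for all `T ≥ 0`,
then the outputs are `L²`-synchronized: `∫_0^∞ ‖y_j - y_i‖² < ∞` for all `i, j`. -/
theorem output_L2_synchronization_relaxed
    (N m : ℕ) (A : Fin N → Fin N → ℝ)
    (hA_nonneg : ∀ i j, 0 ≤ A i j)
    (hA_diag : ∀ i, A i i = 0)
    (hconn : ∀ i j : Fin N, i ≠ j → Relation.TransGen (fun a b => 0 < A a b) i j)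
    (α : Fin N → ℝ)
    (hα_nonneg : ∀ i, 0 ≤ α i)
    (hα_deg : ∀ i, (∑ j, A i j) * α i < 1 / 2)
    (y : Fin N → ℝ → EuclideanSpace ℝ (Fin m))
    (hy_cont : ∀ i, Continuous (y i))
    (u : Fin N → ℝ → EuclideanSpace ℝ (Fin m))
    (hu : ∀ i t, u i t = ∑ j, A i j • (y j t - y i t))
    (𝒱 : Fin N → ℝ)
    (h𝒱_nonneg : ∀ i, 0 ≤ 𝒱 i)
    (hdiss : ∀ i, ∀ T, 0 ≤ T →
      -𝒱 i ≤ ∫ t in (0 : ℝ)..T, (⟪y i t, u i t⟫ + α i * ‖u i t‖ ^ 2)) :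
    ∀ i j, IntegrableOn (fun t => ‖y j t - y i t‖ ^ 2) (Set.Ici (0 : ℝ)) := by
  classical
  intro i j
  by_cases hij : i = j
  · subst hij
    have h0 : (fun t : ℝ => ‖y i t - y i t‖ ^ 2) = fun _ => (0 : ℝ) := by
      funext t; simp
    rw [h0]
    exact integrableOn_zero
  haveI : Nonempty (Fin N) := ⟨i⟩
  obtain ⟨ξ, hξ_pos, hξ⟩ := exists_perron_vector N A hA_nonneg hA_diag hconn
  -- continuity facts
  have hu_cont : ∀ a, Continuous (u a) := by
    intro a
    have h1 : u a = fun t => ∑ b, A a b • (y b t - y a t) := funext (hu a)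
    rw [h1]
    exact continuous_finset_sum _ fun b _ =>
      Continuous.const_smul ((hy_cont b).sub (hy_cont a)) (A a b)
  have hf_cont : ∀ a, Continuous (fun t => ⟪y a t, u a t⟫ + α a * ‖u a t‖ ^ 2) := fun a =>
    ((hy_cont a).inner (hu_cont a)).add (continuous_const.mul ((hu_cont a).norm.pow 2))
  -- notation
  set w : Fin N → Fin N → ℝ → ℝ := fun a b t => ‖y b t - y a t‖ ^ 2 with hw
  set G : ℝ → ℝ := fun t => ∑ a, ξ a * ∑ b, A a b * w a b t with hG
  have hw_cont : ∀ a b, Continuous (w a b) := fun a b =>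
    ((hy_cont b).sub (hy_cont a)).norm.pow 2
  have hw_nonneg : ∀ a b t, 0 ≤ w a b t := fun a b t => sq_nonneg _
  have hS_nonneg : ∀ a t, 0 ≤ ∑ b, A a b * w a b t := fun a t =>
    Finset.sum_nonneg fun b _ => mul_nonneg (hA_nonneg a b) (hw_nonneg a b t)
  have hG_cont : Continuous G := by
    rw [hG]
    exact continuous_finset_sum _ fun a _ => continuous_const.mul
      (continuous_finset_sum _ fun b _ => continuous_const.mul (hw_cont a b))
  have hG_nonneg : ∀ t, 0 ≤ G t := fun t =>
    Finset.sum_nonneg fun a _ => mul_nonneg (hξ_pos a).le (hS_nonneg a t)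
  -- pointwise identity for the weighted inner-product sum
  have key_inner : ∀ t, ∑ a, ξ a * ⟪y a t, u a t⟫ = -(1 / 2) * G t := by
    intro t
    have h1 : ∀ a, ⟪y a t, u a t⟫ = ∑ b, A a b * ((‖y b t‖ ^ 2 - ‖y a t‖ ^ 2 - w a b t) / 2) := by
      intro a
      rw [hu a t, inner_sum]
      refine Finset.sum_congr rfl fun b _ => ?_
      rw [real_inner_smul_right]
      congr 1
      have hid : ‖y b t - y a t‖ ^ 2
          = ‖y b t‖ ^ 2 - 2 * ⟪y a t, y b t⟫ + ‖y a t‖ ^ 2 := by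
        rw [norm_sub_sq_real, real_inner_comm]
      rw [inner_sub_right, real_inner_self_eq_norm_sq]
      have hwv : w a b t = ‖y b t - y a t‖ ^ 2 := rfl
      rw [hwv, hid]
      ring
    calc ∑ a, ξ a * ⟪y a t, u a t⟫
        = ∑ a, ∑ b, (ξ a * A a b * ‖y b t‖ ^ 2 - ξ a * A a b * ‖y a t‖ ^ 2
            - ξ a * A a b * w a b t) / 2 := by
          refine Finset.sum_congr rfl fun a _ => ?_
          rw [h1 a, Finset.mul_sum]
          exact Finset.sum_congr rfl fun b _ => by ring
      _ = ((∑ a, ∑ b, ξ a * A a b * ‖y b t‖ ^ 2) - (∑ a, ∑ b, ξ a * A a b * ‖y a t‖ ^ 2)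
            - ∑ a, ∑ b, ξ a * A a b * w a b t) / 2 := by
          simp only [← Finset.sum_div, ← Finset.sum_sub_distrib]
      _ = -(1 / 2) * G t := by
          have hL : ∑ a, ∑ b, ξ a * A a b * ‖y b t‖ ^ 2
              = ∑ b, ξ b * (∑ k, A b k) * ‖y b t‖ ^ 2 := by
            rw [Finset.sum_comm]
            refine Finset.sum_congr rfl fun b _ => ?_
            calc ∑ a, ξ a * A a b * ‖y b t‖ ^ 2
                = (∑ a, ξ a * A a b) * ‖y b t‖ ^ 2 := by rw [Finset.sum_mul]
              _ = ξ b * (∑ k, A b k) * ‖y b t‖ ^ 2 := by rw [hξ b]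
          have hR : ∑ a, ∑ b, ξ a * A a b * ‖y a t‖ ^ 2
              = ∑ a, ξ a * (∑ k, A a k) * ‖y a t‖ ^ 2 := by
            refine Finset.sum_congr rfl fun a _ => ?_
            calc ∑ b, ξ a * A a b * ‖y a t‖ ^ 2
                = ∑ b, (ξ a * ‖y a t‖ ^ 2) * A a b :=
                  Finset.sum_congr rfl fun b _ => by ring
              _ = (ξ a * ‖y a t‖ ^ 2) * ∑ b, A a b := by rw [Finset.mul_sum]
              _ = ξ a * (∑ k, A a k) * ‖y a t‖ ^ 2 := by ring
          have hGt : G t = ∑ a, ∑ b, ξ a * A a b * w a b t := by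
            rw [hG]
            refine Finset.sum_congr rfl fun a _ => ?_
            rw [Finset.mul_sum]
            exact Finset.sum_congr rfl fun b _ => by ring
          rw [hL, hR, ← hGt]
          ring
  -- Cauchy-Schwarz bound on the input
  have hCS : ∀ a t, ‖u a t‖ ^ 2 ≤ (∑ k, A a k) * ∑ b, A a b * w a b t := by
    intro a t
    have h1 : ‖u a t‖ ≤ ∑ b, A a b * ‖y b t - y a t‖ := by
      rw [hu a t]
      refine (norm_sum_le _ _).trans ?_
      refine Finset.sum_le_sum fun b _ => ?_
      rw [norm_smul, Real.norm_eq_abs, abs_of_nonneg (hA_nonneg a b)]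
    have h2 : ‖u a t‖ ^ 2 ≤ (∑ b, A a b * ‖y b t - y a t‖) ^ 2 :=
      pow_le_pow_left₀ (norm_nonneg _) h1 2
    refine h2.trans ?_
    have h3 : ∀ b : Fin N, A a b * ‖y b t - y a t‖
        = Real.sqrt (A a b) * (Real.sqrt (A a b) * ‖y b t - y a t‖) := by
      intro b; rw [← mul_assoc, Real.mul_self_sqrt (hA_nonneg a b)]
    calc (∑ b, A a b * ‖y b t - y a t‖) ^ 2
        = (∑ b, Real.sqrt (A a b) * (Real.sqrt (A a b) * ‖y b t - y a t‖)) ^ 2 := by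
          rw [Finset.sum_congr rfl fun b _ => h3 b]
      _ ≤ (∑ b, Real.sqrt (A a b) ^ 2) * ∑ b, (Real.sqrt (A a b) * ‖y b t - y a t‖) ^ 2 :=
          Finset.sum_mul_sq_le_sq_mul_sq _ _ _
      _ = (∑ k, A a k) * ∑ b, A a b * w a b t := by
          congr 1
          · exact Finset.sum_congr rfl fun b _ => Real.sq_sqrt (hA_nonneg a b)
          · refine Finset.sum_congr rfl fun b _ => ?_
            rw [mul_pow, Real.sq_sqrt (hA_nonneg a b)]
  -- the margin ε
  have hNe : (Finset.univ : Finset (Fin N)).Nonempty := Finset.univ_nonempty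
  set ε : ℝ := Finset.univ.inf' hNe (fun a => 1 / 2 - (∑ k, A a k) * α a) with hε
  have hε_pos : 0 < ε := by
    rw [hε, Finset.lt_inf'_iff]
    intro a _
    linarith [hα_deg a]
  have hε_le : ∀ a, (∑ k, A a k) * α a ≤ 1 / 2 - ε := by
    intro a
    have h1 : ε ≤ 1 / 2 - (∑ k, A a k) * α a := by
      rw [hε]
      exact Finset.inf'_le _ (Finset.mem_univ a)
    linarith
  -- pointwise bound:  F ≤ -ε G
  set F : ℝ → ℝ := fun t => ∑ a, ξ a * (⟪y a t, u a t⟫ + α a * ‖u a t‖ ^ 2) with hF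
  have hF_cont : Continuous F := by
    rw [hF]
    exact continuous_finset_sum _ fun a _ => continuous_const.mul (hf_cont a)
  have hFG : ∀ t, F t ≤ -ε * G t := by
    intro t
    have hsplit : F t = (∑ a, ξ a * ⟪y a t, u a t⟫)
        + ∑ a, ξ a * (α a * ‖u a t‖ ^ 2) := by
      rw [hF, ← Finset.sum_add_distrib]
      exact Finset.sum_congr rfl fun a _ => by ring
    have hbound : ∑ a, ξ a * (α a * ‖u a t‖ ^ 2) ≤ (1 / 2 - ε) * G t := by
      have h1 : ∀ a, ξ a * (α a * ‖u a t‖ ^ 2)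
          ≤ ξ a * ((1 / 2 - ε) * ∑ b, A a b * w a b t) := by
        intro a
        refine mul_le_mul_of_nonneg_left ?_ (hξ_pos a).le
        calc α a * ‖u a t‖ ^ 2
            ≤ α a * ((∑ k, A a k) * ∑ b, A a b * w a b t) :=
              mul_le_mul_of_nonneg_left (hCS a t) (hα_nonneg a)
          _ = ((∑ k, A a k) * α a) * ∑ b, A a b * w a b t := by ring
          _ ≤ (1 / 2 - ε) * ∑ b, A a b * w a b t :=
              mul_le_mul_of_nonneg_right (hε_le a) (hS_nonneg a t)
      calc ∑ a, ξ a * (α a * ‖u a t‖ ^ 2)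
          ≤ ∑ a, ξ a * ((1 / 2 - ε) * ∑ b, A a b * w a b t) :=
            Finset.sum_le_sum fun a _ => h1 a
        _ = (1 / 2 - ε) * G t := by
            rw [hG, Finset.mul_sum]
            exact Finset.sum_congr rfl fun a _ => by ring
    have h2 := key_inner t
    linarith [hsplit, hbound, h2]
  -- integral bounds
  set C : ℝ := ∑ a, ξ a * 𝒱 a with hC
  have hF_int_ge : ∀ T, 0 ≤ T → -C ≤ ∫ t in (0:ℝ)..T, F t := by
    intro T hT
    have hint : ∀ a ∈ Finset.univ, IntervalIntegrable
        (fun t => ξ a * (⟪y a t, u a t⟫ + α a * ‖u a t‖ ^ 2)) volume 0 T :=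
      fun a _ => (continuous_const.mul (hf_cont a)).intervalIntegrable 0 T
    have h1 : ∫ t in (0:ℝ)..T, F t
        = ∑ a, ∫ t in (0:ℝ)..T, ξ a * (⟪y a t, u a t⟫ + α a * ‖u a t‖ ^ 2) := by
      rw [hF]; exact intervalIntegral.integral_finset_sum hint
    have h3 : ∀ a ∈ Finset.univ, -(ξ a * 𝒱 a)
        ≤ ∫ t in (0:ℝ)..T, ξ a * (⟪y a t, u a t⟫ + α a * ‖u a t‖ ^ 2) := by
      intro a _
      rw [intervalIntegral.integral_const_mul]
      have h4 := mul_le_mul_of_nonneg_left (hdiss a T hT) (hξ_pos a).le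
      nlinarith [h4]
    have h5 : -C = ∑ a, -(ξ a * 𝒱 a) := by rw [hC]; simp
    rw [h1, h5]
    exact Finset.sum_le_sum h3
  have hG_int_le : ∀ T, 0 ≤ T → (∫ t in (0:ℝ)..T, G t) * ε ≤ C := by
    intro T hT
    have hmon : ∫ t in (0:ℝ)..T, F t ≤ ∫ t in (0:ℝ)..T, -ε * G t :=
      intervalIntegral.integral_mono_on hT (hF_cont.intervalIntegrable 0 T)
        ((continuous_const.mul hG_cont).intervalIntegrable 0 T) (fun t _ => hFG t)
    rw [intervalIntegral.integral_const_mul] at hmon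
    have h4 := hF_int_ge T hT
    nlinarith [hmon, h4]
  -- integrability of G on [0, ∞)
  have hG_ioi : IntegrableOn G (Set.Ioi (0:ℝ)) := by
    refine integrableOn_Ioi_of_intervalIntegral_norm_bounded (C / ε) 0
      (b := fun n : ℕ => (n : ℝ)) (fun n => hG_cont.integrableOn_Ioc)
      tendsto_natCast_atTop_atTop ?_
    refine Filter.Eventually.of_forall fun n => ?_
    have hnn : (0:ℝ) ≤ n := Nat.cast_nonneg n
    have he : ∫ x in (0:ℝ)..n, ‖G x‖ = ∫ x in (0:ℝ)..n, G x :=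
      intervalIntegral.integral_congr fun x _ => Real.norm_of_nonneg (hG_nonneg x)
    rw [he, le_div_iff₀ hε_pos]
    exact hG_int_le n hnn
  have hG_ici : IntegrableOn G (Set.Ici (0:ℝ)) := by
    rw [integrableOn_Ici_iff_integrableOn_Ioi]
    exact hG_ioi
  -- integrability across single edges
  have hedge : ∀ a b, 0 < A a b → IntegrableOn (w a b) (Set.Ici (0:ℝ)) := by
    intro a b hab
    have hpos : 0 < ξ a * A a b := mul_pos (hξ_pos a) hab
    refine Integrable.mono' (hG_ici.const_mul (1 / (ξ a * A a b)))
      ((hw_cont a b).aestronglyMeasurable) ?_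
    refine Filter.Eventually.of_forall fun t => ?_
    rw [Real.norm_of_nonneg (hw_nonneg a b t)]
    have hterm1 : A a b * w a b t ≤ ∑ b', A a b' * w a b' t :=
      Finset.single_le_sum
        (fun b' _ => mul_nonneg (hA_nonneg a b') (hw_nonneg a b' t)) (Finset.mem_univ b)
    have hterm2 : ξ a * (A a b * w a b t) ≤ ξ a * ∑ b', A a b' * w a b' t :=
      mul_le_mul_of_nonneg_left hterm1 (hξ_pos a).le
    have hterm3 : ξ a * ∑ b', A a b' * w a b' t ≤ G t := by
      rw [hG]
      exact Finset.single_le_sum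
        (fun a' _ => mul_nonneg (hξ_pos a').le (hS_nonneg a' t)) (Finset.mem_univ a)
    calc w a b t = (1 / (ξ a * A a b)) * (ξ a * (A a b * w a b t)) := by
          rw [← mul_assoc (ξ a), ← mul_assoc, one_div, inv_mul_cancel₀ hpos.ne', one_mul]
      _ ≤ (1 / (ξ a * A a b)) * G t := by
          refine mul_le_mul_of_nonneg_left ?_ (by positivity)
          linarith
  -- extend along paths
  have hkey : ∀ a b : Fin N, Relation.TransGen (fun p q => 0 < A p q) a b →
      IntegrableOn (w a b) (Set.Ici (0:ℝ)) := by
    intro a b h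
    induction h with
    | single hab => exact hedge _ _ hab
    | @tail p q hap hpq ih =>
        have h2 := hedge _ _ hpq
        refine Integrable.mono' ((ih.const_mul 2).add (h2.const_mul 2))
          ((hw_cont a q).aestronglyMeasurable) ?_
        refine Filter.Eventually.of_forall fun t => ?_
        rw [Real.norm_of_nonneg (hw_nonneg a q t)]
        have hsum : y q t - y a t = (y p t - y a t) + (y q t - y p t) := by abel
        have hle : ‖y q t - y a t‖ ≤ ‖y p t - y a t‖ + ‖y q t - y p t‖ := by
          rw [hsum]; exact norm_add_le _ _
        have h3 : w a q t ≤ (‖y p t - y a t‖ + ‖y q t - y p t‖) ^ 2 :=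
          pow_le_pow_left₀ (norm_nonneg _) hle 2
        have h4 := sq_nonneg (‖y p t - y a t‖ - ‖y q t - y p t‖)
        have hwap : w a p t = ‖y p t - y a t‖ ^ 2 := rfl
        have hwpq : w p q t = ‖y q t - y p t‖ ^ 2 := rfl
        show w a q t ≤ 2 * w a p t + 2 * w p q t
        nlinarith [h3, h4, hwap, hwpq]
  exact hkey i j (hconn i j hij)
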